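/- For all integers k ≥ 2 and all ℓ with 0 < ℓ < C(k,2) = k(k−1)/2, we have ind(k, ℓ) < 1; that is, there exist ε > 0 and N such that for all n ≥ N and every graph G on n vertices, Pr[X_{G,k} = ℓ] ≤ 1 − ε. -/

import Mathlib

open Filter
open Topology

/-- The number of edges of `G` with both endpoints in `A`. -/
noncomputable def edgeCount {V : Type*} (G : SimpleGraph V) (A : Finset V) : ℕ :=
  {e ∈ G.edgeSet | ∀ v ∈ e, v ∈ A}.ncard

/-- The probability that a uniformly random `k`-element subset `A` of `Fin n`
satisfies the property `P`. -/
noncomputable def uniformProb (n k : ℕ) (P : Finset (Fin n) → Prop) : ℝ :=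
  ({A : Finset (Fin n) | A.card = k ∧ P A}.ncard : ℝ) / (n.choose k)

/-- `I(n, k, ℓ)`: the maximum, over all graphs `G` on `n` vertices, of the probability
that a uniformly random `k`-element subset of the vertices induces exactly `ℓ` edges. -/
noncomputable def maxInduceProb (n k ℓ : ℕ) : ℝ :=
  ⨆ G : SimpleGraph (Fin n), uniformProb n k (fun A => edgeCount G A = ℓ)

/-- `ind(k, ℓ) = lim_{n → ∞} I(n, k, ℓ)`. -/
noncomputable def ind (k ℓ : ℕ) : ℝ :=
  limUnder atTop (fun n => maxInduceProb n k ℓ)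

section basic
variable {V : Type*} [Fintype V] [DecidableEq V] (G : SimpleGraph V)

noncomputable def ncnt (u : V) (W : Finset V) : ℕ := {w ∈ (W : Set V) | G.Adj u w}.ncard

lemma edgeCount_insert {u : V} {W : Finset V} (hu : u ∉ W) :
    edgeCount G (insert u W) = edgeCount G W + ncnt G u W := by
  classical
  have hinj : Function.Injective (fun w : V => s(u, w)) := by
    intro a b h
    simp only [Sym2.eq_iff] at h
    rcases h with ⟨_, h⟩ | ⟨h1, h2⟩
    · exact h
    · rw [← h1, h2]
  have hdisj : Disjoint {e ∈ G.edgeSet | ∀ v ∈ e, v ∈ W}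
      ((fun w => s(u, w)) '' {w ∈ (W : Set V) | G.Adj u w}) := by
    rw [Set.disjoint_left]
    rintro e ⟨_, hmem⟩ ⟨w, _, rfl⟩
    exact hu (hmem u (Sym2.mem_mk_left u w))
  have hsplit : {e ∈ G.edgeSet | ∀ v ∈ e, v ∈ insert u W}
      = {e ∈ G.edgeSet | ∀ v ∈ e, v ∈ W} ∪ (fun w => s(u, w)) '' {w ∈ (W : Set V) | G.Adj u w} := by
    ext e
    induction e with
    | _ x y =>
      simp only [Set.mem_setOf_eq, Set.mem_union, Set.mem_image, Sym2.mem_iff, Finset.mem_insert,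
        Finset.mem_coe]
      constructor
      · rintro ⟨he, hmem⟩
        have hx := hmem x (by left; rfl)
        have hy := hmem y (by right; rfl)
        by_cases hxu : x = u
        · subst hxu
          rcases hy with rfl | hyW
          · exact absurd (G.ne_of_adj he rfl) (fun h => h)
          · right; exact ⟨y, ⟨hyW, he⟩, rfl⟩
        · rcases hx with rfl | hxW
          · exact absurd rfl hxu
          · by_cases hyu : y = u
            · subst hyu
              right; exact ⟨x, ⟨hxW, (G.adj_symm he)⟩, Sym2.eq_swap⟩
            · rcases hy with rfl | hyW
              · exact absurd rfl hyu
              · left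
                exact ⟨he, fun v hv => by rcases hv with rfl | rfl <;> assumption⟩
      · rintro (⟨he, hmem⟩ | ⟨w, ⟨hwW, hadj⟩, he⟩)
        · exact ⟨he, fun v hv => Or.inr (hmem v hv)⟩
        · have : s(x, y) = s(u, w) := he.symm
          constructor
          · rw [this]; exact hadj
          · intro v hv
            have hv' : v ∈ s(u, w) := by rw [← this]; exact Sym2.mem_iff.mpr hv
            rcases Sym2.mem_iff.mp hv' with rfl | rfl
            · left; rfl
            · right; exact hwW
  rw [edgeCount, hsplit, Set.ncard_union_eq hdisj (Set.toFinite _) (Set.toFinite _),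
    Set.ncard_image_of_injective _ hinj]
  rfl

lemma edgeCount_empty : edgeCount G (∅ : Finset V) = 0 := by
  rw [edgeCount, Set.ncard_eq_zero (Set.toFinite _)]
  ext e
  induction e with
  | _ x y =>
    simp only [Set.mem_setOf_eq, Set.mem_empty_iff_false, iff_false, not_and]
    intro _ h
    exact absurd (h x (Sym2.mem_mk_left x y)) (Finset.notMem_empty x)

lemma edgeCount_eq_zero {A : Finset V} (h : ∀ x ∈ A, ∀ y ∈ A, ¬ G.Adj x y) :
    edgeCount G A = 0 := by
  rw [edgeCount, Set.ncard_eq_zero (Set.toFinite _)]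
  ext e
  induction e with
  | _ x y =>
    simp only [Set.mem_setOf_eq, Set.mem_empty_iff_false, iff_false, not_and]
    intro he hmem
    exact h x (hmem x (Sym2.mem_mk_left x y)) y (hmem y (Sym2.mem_mk_right x y)) he

lemma ncnt_eq_card {u : V} {W : Finset V} (h : ∀ w ∈ W, G.Adj u w) :
    ncnt G u W = W.card := by
  rw [ncnt]
  have : {w ∈ (W : Set V) | G.Adj u w} = (W : Set V) := by
    ext w; simp only [Set.mem_setOf_eq, Finset.mem_coe, and_iff_left_iff_imp]
    exact h w
  rw [this, Set.ncard_coe_finset]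

lemma ncnt_eq_zero {u : V} {W : Finset V} (h : ∀ w ∈ W, ¬ G.Adj u w) :
    ncnt G u W = 0 := by
  rw [ncnt, Set.ncard_eq_zero (Set.toFinite _)]
  ext w; simp only [Set.mem_setOf_eq, Finset.mem_coe, Set.mem_empty_iff_false, iff_false, not_and]
  exact h w

open scoped Classical in
lemma ncnt_insert {u w : V} {W : Finset V} (hw : w ∉ W) :
    ncnt G u (insert w W) = ncnt G u W + (if G.Adj u w then 1 else 0) := by
  classical
  rw [ncnt, ncnt]
  by_cases h : G.Adj u w
  · rw [if_pos h]
    have : {x ∈ ((insert w W : Finset V) : Set V) | G.Adj u x}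
        = insert w {x ∈ (W : Set V) | G.Adj u x} := by
      ext x
      simp only [Set.mem_setOf_eq, Finset.coe_insert, Set.mem_insert_iff]
      constructor
      · rintro ⟨rfl | hx, ha⟩
        · left; rfl
        · right; exact ⟨hx, ha⟩
      · rintro (rfl | ⟨hx, ha⟩)
        · exact ⟨Or.inl rfl, h⟩
        · exact ⟨Or.inr hx, ha⟩
    rw [this, Set.ncard_insert_of_notMem (by simp [hw]) (Set.toFinite _)]
  · rw [if_neg h]
    have : {x ∈ ((insert w W : Finset V) : Set V) | G.Adj u x}
        = {x ∈ (W : Set V) | G.Adj u x} := by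
      ext x
      simp only [Set.mem_setOf_eq, Finset.coe_insert, Set.mem_insert_iff]
      constructor
      · rintro ⟨rfl | hx, ha⟩
        · exact absurd ha h
        · exact ⟨hx, ha⟩
      · rintro ⟨hx, ha⟩; exact ⟨Or.inr hx, ha⟩
    rw [this, Nat.add_zero]

lemma edgeCount_clique {A : Finset V} (h : ∀ x ∈ A, ∀ y ∈ A, x ≠ y → G.Adj x y) :
    edgeCount G A = A.card.choose 2 := by
  classical
  induction A using Finset.induction_on with
  | empty => simp [edgeCount_empty]
  | @insert u W hu ih =>
    rw [edgeCount_insert G hu, ncnt_eq_card G (fun w hw => h u (Finset.mem_insert_self u W) w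
        (Finset.mem_insert_of_mem hw) (fun he => hu (he ▸ hw))),
      ih (fun x hx y hy => h x (Finset.mem_insert_of_mem hx) y (Finset.mem_insert_of_mem hy)),
      Finset.card_insert_of_notMem hu]
    have h2 : (W.card + 1).choose 2 = W.card.choose 1 + W.card.choose 2 :=
      Nat.choose_succ_succ W.card 1
    rw [h2, Nat.choose_one_right]
    omega

end basic

section const
variable {V : Type*} [Fintype V] [DecidableEq V] {G : SimpleGraph V} {k ℓ : ℕ} {S : Finset V}

lemma swap_lemma (hk : 1 ≤ k) (hconst : ∀ A ⊆ S, A.card = k → edgeCount G A = ℓ)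
    {T : Finset V} (hTS : T ⊆ S) (hT : T.card = k - 1) {u v : V} (hu : u ∈ S) (hv : v ∈ S)
    (huT : u ∉ T) (hvT : v ∉ T) : ncnt G u T = ncnt G v T := by
  have h1 := hconst (insert u T) (Finset.insert_subset hu hTS)
    (by rw [Finset.card_insert_of_notMem huT, hT]; omega)
  have h2 := hconst (insert v T) (Finset.insert_subset hv hTS)
    (by rw [Finset.card_insert_of_notMem hvT, hT]; omega)
  rw [edgeCount_insert G huT] at h1
  rw [edgeCount_insert G hvT] at h2
  omega

lemma pt_lemma (hk : 2 ≤ k) (hS : k + 2 ≤ S.card)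
    (hconst : ∀ A ⊆ S, A.card = k → edgeCount G A = ℓ)
    {u v w : V} (hu : u ∈ S) (hv : v ∈ S) (hw : w ∈ S)
    (huv : u ≠ v) (huw : u ≠ w) (hvw : v ≠ w)
    (hadj : G.Adj u w) (hnadj : ¬ G.Adj v w) : False := by
  classical
  have hk1 : 1 ≤ k := by omega
  -- claim: for every z ∈ S with z ≠ u, z ≠ v : Adj u z ∧ ¬ Adj v z
  have CZ : ∀ z ∈ S, z ≠ u → z ≠ v → G.Adj u z ∧ ¬ G.Adj v z := by
    intro z hz hzu hzv
    by_cases hzw : z = w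
    · subst hzw; exact ⟨hadj, hnadj⟩
    · -- pick W' ⊆ S \ {u,v,w,z} of size k-2
      have hcard : k - 2 ≤ (S \ {u, v, w, z}).card := by
        have h4 : ({u, v, w, z} : Finset V).card ≤ 4 := by
          apply le_trans (Finset.card_insert_le _ _)
          have := Finset.card_insert_le w ({z} : Finset V)
          have := Finset.card_insert_le v ({w, z} : Finset V)
          simp_all
          omega
        have := Finset.le_card_sdiff ({u, v, w, z} : Finset V) S
        omega
      obtain ⟨W', hW'sub, hW'card⟩ := Finset.exists_subset_card_eq hcard
      have hmem : ∀ x ∈ W', x ∈ S ∧ x ≠ u ∧ x ≠ v ∧ x ≠ w ∧ x ≠ z := by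
        intro x hx
        have := hW'sub hx
        simp only [Finset.mem_sdiff, Finset.mem_insert, Finset.mem_singleton] at this
        tauto
      have hwW' : w ∉ W' := fun h => ((hmem w h).2.2.2.1) rfl
      have hzW' : z ∉ W' := fun h => ((hmem z h).2.2.2.2) rfl
      have huW' : u ∉ W' := fun h => ((hmem u h).2.1) rfl
      have hvW' : v ∉ W' := fun h => ((hmem v h).2.2.1) rfl
      have hW'S : W' ⊆ S := fun x hx => (hmem x hx).1
      -- W = insert w W'
      have hsw1 : ncnt G u (insert w W') = ncnt G v (insert w W') := by
        apply swap_lemma hk1 hconst (Finset.insert_subset hw hW'S)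
          (by rw [Finset.card_insert_of_notMem hwW', hW'card]; omega) hu hv
        · simp [huw, huW']
        · simp [hvw, hvW']
      have hsw2 : ncnt G u (insert z W') = ncnt G v (insert z W') := by
        apply swap_lemma hk1 hconst (Finset.insert_subset hz hW'S)
          (by rw [Finset.card_insert_of_notMem hzW', hW'card]; omega) hu hv
        · simp only [Finset.mem_insert, not_or]
          exact ⟨fun h => hzu h.symm, huW'⟩
        · simp only [Finset.mem_insert, not_or]
          exact ⟨fun h => hzv h.symm, hvW'⟩
      rw [ncnt_insert G hwW', ncnt_insert G hwW'] at hsw1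
      rw [ncnt_insert G hzW', ncnt_insert G hzW'] at hsw2
      rw [if_pos hadj, if_neg hnadj] at hsw1
      constructor
      · by_contra h
        rw [if_neg h] at hsw2
        by_cases h2 : G.Adj v z <;> simp only [if_pos, if_neg, h2, if_true, if_false] at hsw2 <;>
          omega
      · intro h
        rw [if_pos h] at hsw2
        by_cases h2 : G.Adj u z <;> simp only [if_pos, if_neg, h2, if_true, if_false] at hsw2 <;>
          omega
  -- final contradiction with a (k-1)-set avoiding u, v
  have hcard : k - 1 ≤ (S \ {u, v}).card := by
    have h2 : ({u, v} : Finset V).card ≤ 2 := by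
      apply le_trans (Finset.card_insert_le _ _); simp
    have := Finset.le_card_sdiff ({u, v} : Finset V) S
    omega
  obtain ⟨T, hTsub, hTcard⟩ := Finset.exists_subset_card_eq hcard
  have hmem : ∀ x ∈ T, x ∈ S ∧ x ≠ u ∧ x ≠ v := by
    intro x hx
    have := hTsub hx
    simp only [Finset.mem_sdiff, Finset.mem_insert, Finset.mem_singleton] at this
    tauto
  have hsw := swap_lemma hk1 hconst (fun x hx => (hmem x hx).1) hTcard hu hv
    (fun h => ((hmem u h).2.1) rfl) (fun h => ((hmem v h).2.2) rfl)
  rw [ncnt_eq_card G (fun t ht => ((CZ t (hmem t ht).1 (hmem t ht).2.1 (hmem t ht).2.2).1)),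
    ncnt_eq_zero G (fun t ht => ((CZ t (hmem t ht).1 (hmem t ht).2.1 (hmem t ht).2.2).2))] at hsw
  omega

lemma const_false (hk : 2 ≤ k) (hℓ0 : 0 < ℓ) (hℓ : ℓ < k.choose 2) (hS : k + 2 ≤ S.card)
    (hconst : ∀ A ⊆ S, A.card = k → edgeCount G A = ℓ) : False := by
  classical
  obtain ⟨A, hAsub, hAcard⟩ := Finset.exists_subset_card_eq (show k ≤ S.card by omega)
  by_cases hedge : ∃ a ∈ S, ∃ b ∈ S, G.Adj a b
  · obtain ⟨a, ha, b, hb, hab⟩ := hedge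
    have hne : a ≠ b := G.ne_of_adj hab
    have hay : ∀ y ∈ S, y ≠ a → G.Adj a y := by
      intro y hy hya
      by_cases hyb : y = b
      · subst hyb; exact hab
      · by_contra hcon
        exact pt_lemma hk hS hconst hb hy ha (fun h => hyb h.symm) hne.symm hya
          hab.symm (fun h => hcon h.symm)
    have hall : ∀ x ∈ S, ∀ y ∈ S, x ≠ y → G.Adj x y := by
      intro x hx y hy hxy
      by_cases hxa : x = a
      · subst hxa; exact hay y hy (fun h => hxy h.symm)
      · by_cases hya : y = a
        · subst hya; exact (hay x hx hxa).symm
        · by_contra hcon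
          exact pt_lemma hk hS hconst ha hx hy (fun h => hxa h.symm) (fun h => hya h.symm) hxy
            (hay y hy hya) hcon
    have := hconst A hAsub hAcard
    rw [edgeCount_clique G (fun x hx y hy => hall x (hAsub hx) y (hAsub hy)), hAcard] at this
    omega
  · push_neg at hedge
    have := hconst A hAsub hAcard
    rw [edgeCount_eq_zero G (fun x hx y hy => hedge x (hAsub hx) y (hAsub hy))] at this
    omega

end const

open scoped Classical in
lemma card_supersets {α : Type*} [Fintype α] [DecidableEq α] (A : Finset α) {R : ℕ}
    (hA : A.card ≤ R) :
    ((Finset.powersetCard R Finset.univ).filter (fun S => A ⊆ S)).card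
      = (Fintype.card α - A.card).choose (R - A.card) := by
  rw [← Finset.card_compl A, ← Finset.card_powersetCard]
  apply Finset.card_bij' (fun S _ => S \ A) (fun B _ => A ∪ B)
  · intro S hS
    simp only [Finset.mem_filter, Finset.mem_powersetCard] at hS ⊢
    obtain ⟨⟨_, hcard⟩, hsub⟩ := hS
    refine ⟨fun x hx => ?_, ?_⟩
    · simp only [Finset.mem_sdiff] at hx
      simp [hx.2]
    · rw [Finset.card_sdiff_of_subset hsub, hcard]
  · intro B hB
    simp only [Finset.mem_powersetCard] at hB
    obtain ⟨hsub, hcard⟩ := hB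
    have hdisj : Disjoint A B := by
      rw [Finset.disjoint_left]
      intro x hxA hxB
      have := hsub hxB
      simp only [Finset.mem_compl] at this
      exact this hxA
    simp only [Finset.mem_filter, Finset.mem_powersetCard]
    refine ⟨⟨Finset.subset_univ _, ?_⟩, Finset.subset_union_left⟩
    rw [Finset.card_union_of_disjoint hdisj, hcard]
    omega
  · intro S hS
    simp only [Finset.mem_filter] at hS
    exact Finset.union_sdiff_of_subset hS.2
  · intro B hB
    simp only [Finset.mem_powersetCard] at hB
    have hdisj : Disjoint A B := by
      rw [Finset.disjoint_left]
      intro x hxA hxB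
      have := hB.1 hxB
      simp only [Finset.mem_compl] at this
      exact this hxA
    rw [Finset.union_sdiff_cancel_left hdisj]

open scoped Classical in
lemma good_count' {n k ℓ : ℕ} (hk : 2 ≤ k) (hℓ0 : 0 < ℓ) (hℓ : ℓ < k.choose 2)
    (G : SimpleGraph (Fin n)) (hn : k + 2 ≤ n) :
    n.choose k ≤ (k + 2).choose k *
      (Finset.univ.filter (fun A : Finset (Fin n) => A.card = k ∧ edgeCount G A ≠ ℓ)).card := by
  set R := k + 2 with hR
  set Good := Finset.univ.filter (fun A : Finset (Fin n) => A.card = k ∧ edgeCount G A ≠ ℓ)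
    with hGood
  have hSmem : ∀ S ∈ Finset.powersetCard R (Finset.univ : Finset (Fin n)),
      ∃ A ∈ Good, A ⊆ S := by
    intro S hS
    simp only [Finset.mem_powersetCard] at hS
    by_contra hcon
    push_neg at hcon
    apply const_false (G := G) hk hℓ0 hℓ (by rw [hS.2])
    intro A hAS hAcard
    by_contra hne
    exact absurd hAS (hcon A (by simp [hGood, hAcard, hne]))
  -- double counting
  have key : (Finset.powersetCard R (Finset.univ : Finset (Fin n))).card
      ≤ ∑ A ∈ Good, ((Finset.powersetCard R Finset.univ).filter (fun S => A ⊆ S)).card := by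
    calc (Finset.powersetCard R (Finset.univ : Finset (Fin n))).card
        = ∑ S ∈ Finset.powersetCard R (Finset.univ : Finset (Fin n)), 1 := by simp
      _ ≤ ∑ S ∈ Finset.powersetCard R (Finset.univ : Finset (Fin n)),
            (Good.filter (fun A => A ⊆ S)).card := by
          apply Finset.sum_le_sum
          intro S hS
          obtain ⟨A, hA, hAS⟩ := hSmem S hS
          exact Finset.card_pos.mpr ⟨A, Finset.mem_filter.mpr ⟨hA, hAS⟩⟩
      _ = ∑ S ∈ Finset.powersetCard R (Finset.univ : Finset (Fin n)),
            ∑ A ∈ Good, if A ⊆ S then 1 else 0 := by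
          apply Finset.sum_congr rfl
          intro S _
          rw [Finset.card_filter]
      _ = ∑ A ∈ Good, ∑ S ∈ Finset.powersetCard R (Finset.univ : Finset (Fin n)),
            if A ⊆ S then 1 else 0 := Finset.sum_comm
      _ = ∑ A ∈ Good, ((Finset.powersetCard R Finset.univ).filter (fun S => A ⊆ S)).card := by
          apply Finset.sum_congr rfl
          intro A _
          rw [Finset.card_filter]
  have hsum : ∑ A ∈ Good, ((Finset.powersetCard R Finset.univ).filter (fun S => A ⊆ S)).card
      = Good.card * (n - k).choose (R - k) := by
    rw [Finset.sum_congr rfl (fun A hA => ?_), Finset.sum_const, smul_eq_mul]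
    have hAcard : A.card = k := (Finset.mem_filter.mp hA).2.1
    rw [card_supersets A (by omega), hAcard]
    simp
  rw [Finset.card_powersetCard, Finset.card_univ, Fintype.card_fin] at key
  rw [hsum] at key
  -- n.choose R * R.choose k = n.choose k * (n-k).choose (R-k)
  have hid := Nat.choose_mul (n := n) (show k ≤ R by omega)
  have hpos : 0 < (n - k).choose (R - k) := Nat.choose_pos (by omega)
  have : n.choose k * (n - k).choose (R - k) ≤ R.choose k * Good.card * (n - k).choose (R - k) := by
    calc n.choose k * (n - k).choose (R - k) = n.choose R * R.choose k := hid.symm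
      _ ≤ (Good.card * (n - k).choose (R - k)) * R.choose k := by
          exact Nat.mul_le_mul_right _ key
      _ = R.choose k * Good.card * (n - k).choose (R - k) := by ring
  exact Nat.le_of_mul_le_mul_right (by omega) hpos

lemma ncard_setOf_eq_card_filter {α : Type*} [Fintype α] (p : α → Prop) [DecidablePred p] :
    {x | p x}.ncard = (Finset.univ.filter p).card := by
  rw [← Set.ncard_coe_finset]
  congr 1
  ext x
  simp

lemma good_count {n k ℓ : ℕ} (hk : 2 ≤ k) (hℓ0 : 0 < ℓ) (hℓ : ℓ < k.choose 2)
    (G : SimpleGraph (Fin n)) (hn : k + 2 ≤ n) :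
    n.choose k ≤ (k + 2).choose k *
      {A : Finset (Fin n) | A.card = k ∧ edgeCount G A ≠ ℓ}.ncard := by
  classical
  rw [ncard_setOf_eq_card_filter]
  exact good_count' hk hℓ0 hℓ G hn

lemma setOf_card_ncard (n k : ℕ) : {A : Finset (Fin n) | A.card = k}.ncard = n.choose k := by
  classical
  rw [ncard_setOf_eq_card_filter]
  have : Finset.univ.filter (fun A : Finset (Fin n) => A.card = k)
      = Finset.powersetCard k (Finset.univ : Finset (Fin n)) := by
    ext A
    simp [Finset.mem_powersetCard]
  rw [this, Finset.card_powersetCard, Finset.card_univ, Fintype.card_fin]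

lemma event_ncard_le (n k : ℕ) (P : Finset (Fin n) → Prop) :
    {A : Finset (Fin n) | A.card = k ∧ P A}.ncard ≤ n.choose k := by
  rw [← setOf_card_ncard n k]
  exact Set.ncard_le_ncard (fun A hA => hA.1) (Set.toFinite _)

lemma uniformProb_nonneg (n k : ℕ) (P : Finset (Fin n) → Prop) : 0 ≤ uniformProb n k P := by
  rw [uniformProb]; positivity

lemma uniformProb_le_one (n k : ℕ) (P : Finset (Fin n) → Prop) : uniformProb n k P ≤ 1 := by
  rw [uniformProb]
  rcases Nat.eq_zero_or_pos (n.choose k) with h | h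
  · rw [h]
    push_cast
    rw [div_zero]
    norm_num
  · rw [div_le_one (by exact_mod_cast h)]
    exact_mod_cast event_ncard_le n k P

lemma maxInduceProb_le_one (n k ℓ : ℕ) : maxInduceProb n k ℓ ≤ 1 :=
  Real.iSup_le (fun _ => uniformProb_le_one n k _) one_pos.le

lemma bddAbove_uniformProb (n k ℓ : ℕ) :
    BddAbove (Set.range fun G : SimpleGraph (Fin n) =>
      uniformProb n k (fun A => edgeCount G A = ℓ)) := by
  refine ⟨1, ?_⟩
  rintro x ⟨G, rfl⟩
  exact uniformProb_le_one n k _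

lemma maxInduceProb_nonneg (n k ℓ : ℕ) : 0 ≤ maxInduceProb n k ℓ :=
  le_trans (uniformProb_nonneg n k _) (le_ciSup (bddAbove_uniformProb n k ℓ) ⊥)

lemma prob_bound {n k ℓ : ℕ} (hk : 2 ≤ k) (hℓ0 : 0 < ℓ) (hℓ : ℓ < k.choose 2)
    (hn : k + 2 ≤ n) (G : SimpleGraph (Fin n)) :
    uniformProb n k (fun A => edgeCount G A = ℓ) ≤ 1 - 1 / ((k + 2).choose k : ℝ) := by
  rw [uniformProb]
  set E := {A : Finset (Fin n) | A.card = k ∧ edgeCount G A = ℓ} with hE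
  set Good := {A : Finset (Fin n) | A.card = k ∧ edgeCount G A ≠ ℓ} with hGood
  have hdisj : Disjoint E Good := by
    rw [Set.disjoint_left]
    rintro A ⟨_, h1⟩ ⟨_, h2⟩
    exact h2 h1
  have hcardsum : E.ncard + Good.ncard ≤ n.choose k := by
    rw [← Set.ncard_union_eq hdisj (Set.toFinite _) (Set.toFinite _)]
    rw [← setOf_card_ncard n k]
    apply Set.ncard_le_ncard _ (Set.toFinite _)
    rintro A (hA | hA) <;> exact hA.1
  have hgc := good_count hk hℓ0 hℓ G hn
  have hcpos : (0 : ℝ) < (n.choose k : ℝ) := by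
    exact_mod_cast Nat.choose_pos (by omega : k ≤ n)
  have hrpos : (0 : ℝ) < ((k + 2).choose k : ℝ) := by
    exact_mod_cast Nat.choose_pos (by omega : k ≤ k + 2)
  rw [div_le_iff₀ hcpos]
  have h1 : (n.choose k : ℝ) / ((k + 2).choose k : ℝ) ≤ (Good.ncard : ℝ) := by
    rw [div_le_iff₀ hrpos]
    calc (n.choose k : ℝ) ≤ ((k + 2).choose k * Good.ncard : ℕ) := by exact_mod_cast hgc
      _ = (Good.ncard : ℝ) * ((k + 2).choose k : ℝ) := by push_cast; ring
  have h2 : (E.ncard : ℝ) + (Good.ncard : ℝ) ≤ (n.choose k : ℝ) := by exact_mod_cast hcardsum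
  have h3 : (1 - 1 / ((k + 2).choose k : ℝ)) * (n.choose k : ℝ)
      = (n.choose k : ℝ) - (n.choose k : ℝ) / ((k + 2).choose k : ℝ) := by ring
  linarith

/-- transporting edge counts along an embedding -/
lemma edgeCount_comap {α β : Type*} (G : SimpleGraph β) (f : α ↪ β) (B : Finset α) :
    edgeCount (G.comap f) B = edgeCount G (B.map f) := by
  rw [edgeCount, edgeCount]
  have himg : {e ∈ G.edgeSet | ∀ v ∈ e, v ∈ B.map f}
      = Sym2.map f '' {e ∈ (G.comap f).edgeSet | ∀ v ∈ e, v ∈ B} := by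
    ext e
    induction e with
    | _ x y =>
      simp only [Set.mem_setOf_eq, Set.mem_image]
      constructor
      · rintro ⟨he, hmem⟩
        obtain ⟨b1, hb1, hfb1⟩ := Finset.mem_map.mp (hmem x (Sym2.mem_mk_left x y))
        obtain ⟨b2, hb2, hfb2⟩ := Finset.mem_map.mp (hmem y (Sym2.mem_mk_right x y))
        refine ⟨s(b1, b2), ⟨?_, ?_⟩, ?_⟩
        · simp only [SimpleGraph.mem_edgeSet, SimpleGraph.comap_adj]
          rw [hfb1, hfb2]
          exact he
        · intro v hv
          rcases Sym2.mem_iff.mp hv with rfl | rfl <;> assumption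
        · rw [Sym2.map_pair_eq, hfb1, hfb2]
      · rintro ⟨e', h, heq⟩
        revert h heq
        induction e' with
        | _ b1 b2 =>
          rintro ⟨he', hmem⟩ heq
          rw [Sym2.map_pair_eq] at heq
          rw [← heq]
          simp only [SimpleGraph.mem_edgeSet, SimpleGraph.comap_adj] at he'
          refine ⟨he', ?_⟩
          intro v hv
          rcases Sym2.mem_iff.mp hv with rfl | rfl
          · exact Finset.mem_map_of_mem f (hmem b1 (Sym2.mem_mk_left b1 b2))
          · exact Finset.mem_map_of_mem f (hmem b2 (Sym2.mem_mk_right b1 b2))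
  rw [himg, Set.ncard_image_of_injective _ (Sym2.map.injective f.injective)]

lemma count_remove {n k ℓ : ℕ} (G : SimpleGraph (Fin (n + 1))) (v : Fin (n + 1)) :
    (Finset.univ.filter (fun B : Finset (Fin n) =>
        B.card = k ∧ edgeCount (G.comap v.succAboveEmb) B = ℓ)).card
      = (Finset.univ.filter (fun A : Finset (Fin (n + 1)) =>
        (A.card = k ∧ edgeCount G A = ℓ) ∧ v ∉ A)).card := by
  set f := v.succAboveEmb with hf
  rw [← Finset.card_image_of_injective _ (Finset.map_injective f)]
  congr 1
  ext A
  simp only [Finset.mem_image, Finset.mem_filter, Finset.mem_univ, true_and]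
  constructor
  · rintro ⟨B, ⟨hcard, hcnt⟩, rfl⟩
    refine ⟨⟨?_, ?_⟩, ?_⟩
    · rw [Finset.card_map]; exact hcard
    · rw [← edgeCount_comap G f B]; exact hcnt
    · intro hmem
      obtain ⟨b, _, hb⟩ := Finset.mem_map.mp hmem
      exact Fin.succAbove_ne v b hb
  · rintro ⟨⟨hcard, hcnt⟩, hv⟩
    have hsub : A ⊆ Finset.map f Finset.univ := by
      intro a ha
      obtain ⟨b, hb⟩ := Fin.exists_succAbove_eq (show a ≠ v from fun h => hv (h ▸ ha))
      exact Finset.mem_map.mpr ⟨b, Finset.mem_univ b, hb⟩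
    obtain ⟨B, _, rfl⟩ := Finset.subset_map_iff.mp hsub
    refine ⟨B, ⟨?_, ?_⟩, rfl⟩
    · rw [Finset.card_map] at hcard; exact hcard
    · rw [edgeCount_comap G f B]; exact hcnt

lemma count_split {n k ℓ : ℕ} (hk : k ≤ n + 1) (G : SimpleGraph (Fin (n + 1))) :
    (Finset.univ.filter (fun A : Finset (Fin (n + 1)) =>
        A.card = k ∧ edgeCount G A = ℓ)).card * (n + 1 - k)
      = ∑ v : Fin (n + 1), (Finset.univ.filter (fun B : Finset (Fin n) =>
          B.card = k ∧ edgeCount (G.comap v.succAboveEmb) B = ℓ)).card := by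
  rw [Finset.sum_congr rfl (fun v _ => count_remove G v)]
  have : ∀ v : Fin (n + 1), (Finset.univ.filter (fun A : Finset (Fin (n + 1)) =>
      (A.card = k ∧ edgeCount G A = ℓ) ∧ v ∉ A)).card
      = ∑ A ∈ Finset.univ.filter (fun A : Finset (Fin (n + 1)) =>
          A.card = k ∧ edgeCount G A = ℓ), if v ∉ A then 1 else 0 := by
    intro v
    rw [← Finset.filter_filter, Finset.card_filter]
  rw [Finset.sum_congr rfl (fun v _ => this v), Finset.sum_comm]
  have hsum2 : ∀ A ∈ Finset.univ.filter (fun A : Finset (Fin (n + 1)) =>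
      A.card = k ∧ edgeCount G A = ℓ),
      (∑ v : Fin (n + 1), if v ∉ A then 1 else 0) = n + 1 - k := by
    intro A hA
    simp only [Finset.mem_filter] at hA
    rw [← Finset.card_filter]
    have h2 : Finset.univ.filter (fun v : Fin (n + 1) => v ∉ A) = Aᶜ := by
      ext v; simp
    rw [h2, Finset.card_compl, Fintype.card_fin, hA.2.1]
  rw [Finset.sum_congr rfl hsum2, Finset.sum_const, smul_eq_mul, Nat.mul_comm]

lemma uniformProb_eq (n k : ℕ) (P : Finset (Fin n) → Prop) [DecidablePred P] :
    uniformProb n k P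
      = ((Finset.univ.filter (fun A : Finset (Fin n) => A.card = k ∧ P A)).card : ℝ)
        / (n.choose k) := by
  rw [uniformProb, ncard_setOf_eq_card_filter]

lemma maxInduceProb_antitone {k ℓ n : ℕ} (hk : k ≤ n) :
    maxInduceProb (n + 1) k ℓ ≤ maxInduceProb n k ℓ := by
  classical
  apply Real.iSup_le _ (maxInduceProb_nonneg n k ℓ)
  intro G
  set M := maxInduceProb n k ℓ with hM
  have hcpos : (0 : ℝ) < (n.choose k : ℝ) := by exact_mod_cast Nat.choose_pos hk
  have hCpos : (0 : ℝ) < ((n + 1).choose k : ℝ) := by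
    exact_mod_cast Nat.choose_pos (by omega : k ≤ n + 1)
  have hv : ∀ v : Fin (n + 1),
      ((Finset.univ.filter (fun B : Finset (Fin n) =>
        B.card = k ∧ edgeCount (G.comap v.succAboveEmb) B = ℓ)).card : ℝ)
      ≤ M * (n.choose k : ℝ) := by
    intro v
    have h := le_ciSup (bddAbove_uniformProb n k ℓ) (G.comap v.succAboveEmb)
    rw [uniformProb_eq, div_le_iff₀ hcpos] at h
    exact h
  have hsplit := count_split (ℓ := ℓ) (show k ≤ n + 1 by omega) G
  have hd : (0 : ℕ) < n + 1 - k := by omega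
  have hsum : ((Finset.univ.filter (fun A : Finset (Fin (n + 1)) =>
      A.card = k ∧ edgeCount G A = ℓ)).card : ℝ) * ((n + 1 - k : ℕ) : ℝ)
      ≤ (n + 1 : ℝ) * (M * (n.choose k : ℝ)) := by
    calc ((Finset.univ.filter (fun A : Finset (Fin (n + 1)) =>
        A.card = k ∧ edgeCount G A = ℓ)).card : ℝ) * ((n + 1 - k : ℕ) : ℝ)
        = (∑ v : Fin (n + 1), ((Finset.univ.filter (fun B : Finset (Fin n) =>
            B.card = k ∧ edgeCount (G.comap v.succAboveEmb) B = ℓ)).card : ℝ)) := by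
          exact_mod_cast congrArg (fun m : ℕ => (m : ℝ)) hsplit
      _ ≤ ∑ _v : Fin (n + 1), M * (n.choose k : ℝ) := Finset.sum_le_sum (fun v _ => hv v)
      _ = (n + 1 : ℝ) * (M * (n.choose k : ℝ)) := by
          rw [Finset.sum_const, Finset.card_univ, Fintype.card_fin, nsmul_eq_mul]
          push_cast
          ring
  have hid : (n.choose k : ℝ) * (n + 1 : ℝ) = ((n + 1).choose k : ℝ) * ((n + 1 - k : ℕ) : ℝ) := by
    exact_mod_cast congrArg (fun m : ℕ => (m : ℝ)) (Nat.choose_mul_succ_eq n k)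
  rw [uniformProb_eq, div_le_iff₀ hCpos]
  have hdpos : (0 : ℝ) < ((n + 1 - k : ℕ) : ℝ) := by exact_mod_cast hd
  have : ((Finset.univ.filter (fun A : Finset (Fin (n + 1)) =>
      A.card = k ∧ edgeCount G A = ℓ)).card : ℝ) * ((n + 1 - k : ℕ) : ℝ)
      ≤ (M * ((n + 1).choose k : ℝ)) * ((n + 1 - k : ℕ) : ℝ) := by
    calc _ ≤ (n + 1 : ℝ) * (M * (n.choose k : ℝ)) := hsum
      _ = M * ((n.choose k : ℝ) * (n + 1 : ℝ)) := by ring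
      _ = (M * ((n + 1).choose k : ℝ)) * ((n + 1 - k : ℕ) : ℝ) := by rw [hid]; ring
  exact le_of_mul_le_mul_right this hdpos

/-- For `0 < ℓ < C(k,2)` we have `ind(k, ℓ) < 1`: there exist `ε > 0` and `N` such that
for all `n ≥ N` and every graph `G` on `n` vertices, `Pr[X_{G,k} = ℓ] ≤ 1 - ε`. -/
theorem ind_lt_one (k ℓ : ℕ) (hk : 2 ≤ k) (hℓ0 : 0 < ℓ) (hℓ : ℓ < k.choose 2) :
    ind k ℓ < 1 ∧
    ∃ ε : ℝ, 0 < ε ∧ ∃ N : ℕ, ∀ n ≥ N, ∀ G : SimpleGraph (Fin n),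
      uniformProb n k (fun A => edgeCount G A = ℓ) ≤ 1 - ε := by
  have hrpos : (0 : ℝ) < ((k + 2).choose k : ℝ) := by
    exact_mod_cast Nat.choose_pos (by omega : k ≤ k + 2)
  have hε : (0 : ℝ) < 1 / ((k + 2).choose k : ℝ) := by positivity
  have hε1 : 1 / ((k + 2).choose k : ℝ) ≤ 1 := by
    rw [div_le_one hrpos]
    exact_mod_cast Nat.one_le_iff_ne_zero.mpr (Nat.pos_iff_ne_zero.mp
      (Nat.choose_pos (by omega : k ≤ k + 2)))
  have hbound : ∀ n, k + 2 ≤ n → ∀ G : SimpleGraph (Fin n),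
      uniformProb n k (fun A => edgeCount G A = ℓ) ≤ 1 - 1 / ((k + 2).choose k : ℝ) :=
    fun n hn G => prob_bound hk hℓ0 hℓ hn G
  have hmax : ∀ n, k + 2 ≤ n → maxInduceProb n k ℓ ≤ 1 - 1 / ((k + 2).choose k : ℝ) :=
    fun n hn => Real.iSup_le (fun G => hbound n hn G) (by linarith)
  constructor
  · set g : ℕ → ℝ := fun m => maxInduceProb (m + k) k ℓ with hg
    have hga : Antitone g := antitone_nat_of_succ_le (fun m => by
      have h := maxInduceProb_antitone (k := k) (ℓ := ℓ) (n := m + k) (Nat.le_add_left k m)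
      simpa [hg, show m + 1 + k = m + k + 1 by omega] using h)
    have hbdd : BddBelow (Set.range g) := ⟨0, by
      rintro x ⟨m, rfl⟩; exact maxInduceProb_nonneg _ _ _⟩
    have htend : Tendsto g atTop (𝓝 (⨅ m, g m)) := tendsto_atTop_ciInf hga hbdd
    have htend' : Tendsto (fun n => maxInduceProb n k ℓ) atTop (𝓝 (⨅ m, g m)) :=
      (tendsto_add_atTop_iff_nat k).mp htend
    have heq : ind k ℓ = ⨅ m, g m := htend'.limUnder_eq
    rw [heq]
    calc ⨅ m, g m ≤ g 2 := ciInf_le hbdd 2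
      _ ≤ 1 - 1 / ((k + 2).choose k : ℝ) := hmax (2 + k) (by omega)
      _ < 1 := by linarith
  · exact ⟨_, hε, k + 2, fun n hn G => hbound n hn G⟩
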